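/- Let G be the multigraph whose underlying graph is the even cycle C_{2k+2} with vertices v_1,...,v_{2k+2} in cyclic order, with exactly one edge between consecutive vertices v_i, v_{i+1} for i ∈ [2k+1] and exactly l parallel edges between v_1 and v_{2k+2}. Then for every m ≥ l+1, P_DP(G,m) = (m-1)^{2k+1}(m-l) - l. -/

import Mathlib

/-- A finite-multiplicity loopless multigraph on vertex set `V`:
`mult u v` is the number of parallel edges joining `u` and `v`. -/
structure Multigraph (V : Type) where
  mult : V → V → ℕ
  symm : ∀ u v, mult u v = mult v u
  loopless : ∀ v, mult v v = 0

/-- A full `m`-fold cover of a multigraph `G`.  The list of a vertex `u` is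
identified with `{u} × Fin m`; for each ordered pair `(u,v)` and each edge index
`i` (only indices `i < G.mult u v` are relevant) the corresponding perfect
matching between the two lists is recorded as a permutation of `Fin m`, the two
orientations of an edge giving inverse permutations. -/
structure FullCover {V : Type} (G : Multigraph V) (m : ℕ) where
  perm : V → V → ℕ → (Fin m ≃ Fin m)
  compat : ∀ u v i, perm v u i = (perm u v i).symm

/-- `f` (choosing one list element per vertex) is an `H`-coloring: it avoids all
cross edges of the cover. -/
def FullCover.IsColoring {V : Type} {G : Multigraph V} {m : ℕ}
    (c : FullCover G m) (f : V → Fin m) : Prop :=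
  ∀ u v i, i < G.mult u v → (c.perm u v i) (f u) ≠ f v

/-- The number of `H`-colorings of `G` for the cover `c`. -/
noncomputable def FullCover.numColorings {V : Type} {G : Multigraph V} {m : ℕ}
    (c : FullCover G m) : ℕ :=
  Nat.card {f : V → Fin m // c.IsColoring f}

/-- The DP color function: the minimum number of colorings over all full
`m`-fold covers. -/
noncomputable def Multigraph.PDP {V : Type} (G : Multigraph V) (m : ℕ) : ℕ :=
  sInf {n | ∃ c : FullCover G m, n = c.numColorings}

/-- The dual DP color function: the maximum number of colorings over all full
`m`-fold covers. -/
noncomputable def Multigraph.PDPdual {V : Type} (G : Multigraph V) (m : ℕ) : ℕ :=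
  sSup {n | ∃ c : FullCover G m, n = c.numColorings}

/-- The number of proper `m`-colorings of (the underlying graph of) `G`. -/
noncomputable def Multigraph.properCount {V : Type} (G : Multigraph V) (m : ℕ) : ℕ :=
  Nat.card {f : V → Fin m // ∀ u v, 0 < G.mult u v → f u ≠ f v}

/-- The multigraph whose underlying graph is the cycle `C_{2k+2}` with vertices
`0, 1, …, 2k+1` in cyclic order, with exactly one edge between consecutive
vertices `i, i+1` for `0 ≤ i ≤ 2k` and exactly `l` parallel edges between the
vertices `0` and `2k+1`. -/
def cycleWithMultiEdge (k l : ℕ) : Multigraph (Fin (2 * k + 2)) where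
  mult u v :=
    if u = v then 0
    else if u.val + 1 = v.val ∨ v.val + 1 = u.val then 1
    else if (u.val = 0 ∧ v.val = 2 * k + 1) ∨ (v.val = 0 ∧ u.val = 2 * k + 1) then l
    else 0
  symm := by
    intro u v
    try dsimp only
    by_cases h1 : u = v
    · rw [if_pos h1, if_pos h1.symm]
    · rw [if_neg h1, if_neg (Ne.symm h1)]
      by_cases h2 : u.val + 1 = v.val ∨ v.val + 1 = u.val
      · rw [if_pos h2, if_pos (Or.symm h2)]
      · rw [if_neg h2, if_neg (fun h => h2 (Or.symm h))]
        by_cases h3 : (u.val = 0 ∧ v.val = 2 * k + 1) ∨ (v.val = 0 ∧ u.val = 2 * k + 1)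
        · rw [if_pos h3, if_pos (Or.symm h3)]
        · rw [if_neg h3, if_neg (fun h => h3 (Or.symm h))]
  loopless := by intro v; simp

section PDPAux

open Finset
open scoped Classical

/-- Number of "walks" of length `n` from `x` to `y` avoiding the permutations `πs`. -/
noncomputable def Wcnt (m : ℕ) (πs : ℕ → Equiv.Perm (Fin m)) (n : ℕ) (x y : Fin m) : ℕ :=
  Fintype.card {a : Fin (n+1) → Fin m // a 0 = x ∧ a (Fin.last n) = y ∧
    ∀ i : Fin n, πs i.val (a i.castSucc) ≠ a i.succ}

noncomputable def Pcomp {m : ℕ} (πs : ℕ → Equiv.Perm (Fin m)) : ℕ → Equiv.Perm (Fin m)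
  | 0 => 1
  | n+1 => πs n * Pcomp πs n

def Ap (m : ℕ) : ℕ → ℕ × ℕ
  | 0 => (1, 0)
  | n+1 => ((m-1) * (Ap m n).2, (Ap m n).1 + (m-2) * (Ap m n).2)

lemma Wcnt_zero (m : ℕ) (πs : ℕ → Equiv.Perm (Fin m)) (x y : Fin m) :
    Wcnt m πs 0 x y = if x = y then 1 else 0 := by
  rw [Wcnt]
  rcases eq_or_ne x y with h | h
  · subst h
    rw [if_pos rfl]
    rw [Fintype.card_eq_one_iff]
    refine ⟨⟨fun _ => x, rfl, rfl, fun i => i.elim0⟩, ?_⟩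
    rintro ⟨a, h0, hl, -⟩
    ext i
    have : i = 0 := Fin.eq_zero i
    simp [this, h0]
  · rw [if_neg h, Fintype.card_eq_zero_iff]
    constructor
    rintro ⟨a, h0, hl, -⟩
    exact h (h0 ▸ hl ▸ (by rfl : a 0 = a (Fin.last 0)))

lemma Wcnt_succ (m : ℕ) (πs : ℕ → Equiv.Perm (Fin m)) (n : ℕ) (x y : Fin m) :
    Wcnt m πs (n+1) x y = ∑ z : Fin m, if πs n z = y then 0 else Wcnt m πs n x z := by
  rw [Wcnt, Fintype.card_subtype]
  rw [Finset.card_eq_sum_card_fiberwise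
    (f := fun a : Fin (n+1+1) → Fin m => a ((Fin.last n).castSucc))
    (t := (univ : Finset (Fin m))) (fun _ _ => mem_univ _)]
  refine Finset.sum_congr rfl ?_
  intro z _
  rw [Finset.filter_filter]
  by_cases hz : πs n z = y
  · rw [if_pos hz, Finset.card_eq_zero, Finset.eq_empty_iff_forall_notMem]
    intro a ha
    simp only [mem_filter, mem_univ, true_and] at ha
    obtain ⟨⟨h0, hl, hp⟩, hfib⟩ := ha
    have := hp (Fin.last n)
    rw [Fin.succ_last, hl, Fin.val_last, hfib, hz] at this
    · exact this rfl
  · rw [if_neg hz, Wcnt, Fintype.card_subtype]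
    refine Finset.card_nbij' (fun a => Fin.init a) (fun b => Fin.snoc b y) ?_ ?_ ?_ ?_
    · intro a ha
      simp only [mem_coe, mem_filter, mem_univ, true_and] at ha ⊢
      obtain ⟨⟨h0, hl, hp⟩, hfib⟩ := ha
      refine ⟨?_, ?_, ?_⟩
      · show a (Fin.castSucc 0) = x
        rwa [Fin.castSucc_zero]
      · exact hfib
      · intro i
        have := hp i.castSucc
        show πs i.val (a _) ≠ a _
        rw [Fin.succ_castSucc] at this
        exact this
    · intro b hb
      simp only [mem_coe, mem_filter, mem_univ, true_and] at hb ⊢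
      obtain ⟨h0, hl, hp⟩ := hb
      refine ⟨⟨?_, ?_, ?_⟩, ?_⟩
      · rw [show (0 : Fin (n+1+1)) = Fin.castSucc 0 by rw [Fin.castSucc_zero], Fin.snoc_castSucc]
        exact h0
      · rw [Fin.snoc_last]
      · intro i
        refine Fin.lastCases ?_ ?_ i
        · simp only [Fin.val_last, Fin.succ_last, Fin.snoc_castSucc, Fin.snoc_last, hl]
          exact hz
        · intro j
          simp only [Fin.succ_castSucc, Fin.snoc_castSucc, Fin.coe_castSucc]
          exact hp j
      · rw [Fin.snoc_castSucc, hl]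
    · intro a ha
      simp only [mem_coe, mem_filter, mem_univ, true_and] at ha
      obtain ⟨⟨h0, hl, hp⟩, hfib⟩ := ha
      show Fin.snoc (Fin.init a) y = a
      rw [← hl]
      exact Fin.snoc_init_self a
    · intro b _
      exact Fin.init_snoc (α := fun _ => Fin m) y b

lemma Ap_succ (p n : ℕ) : Ap (p+2) (n+1) =
    ((p+1) * (Ap (p+2) n).2, (Ap (p+2) n).1 + p * (Ap (p+2) n).2) := by
  show ((p+2-1) * _, _ + (p+2-2) * _) = _
  rw [show p+2-1 = p+1 by omega, show p+2-2 = p by omega]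

lemma Ap_sum (p n : ℕ) :
    ((Ap (p+2) n).1 : ℤ) + (p+1) * (Ap (p+2) n).2 = (p+1)^n := by
  induction n with
  | zero => simp [Ap]
  | succ n ih => rw [Ap_succ]; push_cast; push_cast at ih; ring_nf; ring_nf at ih; nlinarith [ih]

lemma Ap_diff (p n : ℕ) :
    ((Ap (p+2) n).1 : ℤ) - (Ap (p+2) n).2 = (-1)^n := by
  induction n with
  | zero => simp [Ap]
  | succ n ih => rw [Ap_succ]; push_cast; push_cast at ih; ring_nf; ring_nf at ih; nlinarith [ih]

lemma Wcnt_eq (p : ℕ) (πs : ℕ → Equiv.Perm (Fin (p+2))) (n : ℕ) (x y : Fin (p+2)) :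
    Wcnt (p+2) πs n x y = if y = Pcomp πs n x then (Ap (p+2) n).1 else (Ap (p+2) n).2 := by
  induction n generalizing y with
  | zero =>
    rw [Wcnt_zero]
    simp only [Pcomp, Equiv.Perm.one_apply, Ap, eq_comm]
  | succ n ih =>
    rw [Wcnt_succ]
    have step : ∀ z : Fin (p+2), (if πs n z = y then 0 else Wcnt (p+2) πs n x z)
        = (if z = (πs n).symm y then 0
           else if z = Pcomp πs n x then (Ap (p+2) n).1 else (Ap (p+2) n).2) := by
      intro z
      rw [ih z]
      simp only [Equiv.apply_eq_iff_eq_symm_apply]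
    rw [Finset.sum_congr rfl (fun z _ => step z)]
    rw [← Finset.sum_erase (univ : Finset (Fin (p+2)))
      (a := (πs n).symm y)
      (f := fun z => if z = (πs n).symm y then 0
           else if z = Pcomp πs n x then (Ap (p+2) n).1 else (Ap (p+2) n).2)
      (by simp)]
    have hcomp : (y = Pcomp πs (n+1) x) ↔ ((πs n).symm y = Pcomp πs n x) := by
      rw [show Pcomp πs (n+1) = πs n * Pcomp πs n from rfl]
      rw [Equiv.symm_apply_eq]
      rfl
    by_cases h : y = Pcomp πs (n+1) x
    · rw [if_pos h]
      have ht : (πs n).symm y = Pcomp πs n x := hcomp.mp h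
      have : ∀ z ∈ (univ : Finset (Fin (p+2))).erase ((πs n).symm y),
          (if z = (πs n).symm y then 0
           else if z = Pcomp πs n x then (Ap (p+2) n).1 else (Ap (p+2) n).2)
          = (Ap (p+2) n).2 := by
        intro z hz
        rw [mem_erase] at hz
        rw [if_neg hz.1, if_neg (by rw [← ht]; exact hz.1)]
      rw [Finset.sum_congr rfl this, Finset.sum_const, smul_eq_mul,
        Finset.card_erase_of_mem (mem_univ _), Finset.card_univ, Fintype.card_fin,
        Ap_succ]
      simp only []
      congr 1
    · rw [if_neg h]
      have ht : (πs n).symm y ≠ Pcomp πs n x := fun hh => h (hcomp.mpr hh)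
      have hmem : Pcomp πs n x ∈ (univ : Finset (Fin (p+2))).erase ((πs n).symm y) := by
        rw [mem_erase]
        exact ⟨Ne.symm ht, mem_univ _⟩
      rw [← Finset.add_sum_erase _ _ hmem]
      have : ∀ z ∈ ((univ : Finset (Fin (p+2))).erase ((πs n).symm y)).erase (Pcomp πs n x),
          (if z = (πs n).symm y then 0
           else if z = Pcomp πs n x then (Ap (p+2) n).1 else (Ap (p+2) n).2)
          = (Ap (p+2) n).2 := by
        intro z hz
        rw [mem_erase] at hz
        have hz2 := hz.2
        rw [mem_erase] at hz2
        rw [if_neg hz2.1, if_neg hz.1]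
      rw [Finset.sum_congr rfl this, Finset.sum_const, smul_eq_mul,
        Finset.card_erase_of_mem hmem, Finset.card_erase_of_mem (mem_univ _),
        Finset.card_univ, Fintype.card_fin, if_neg (Ne.symm ht),
        if_pos rfl, Ap_succ]
      simp only []
      congr 2

lemma sum_Wcnt (p : ℕ) (πs : ℕ → Equiv.Perm (Fin (p+2))) (n : ℕ) (x : Fin (p+2)) :
    ∑ y : Fin (p+2), Wcnt (p+2) πs n x y
      = (Ap (p+2) n).1 + (p+1) * (Ap (p+2) n).2 := by
  rw [Finset.sum_congr rfl (fun y _ => Wcnt_eq p πs n x y)]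
  rw [← Finset.add_sum_erase _ _ (mem_univ (Pcomp πs n x)), if_pos rfl]
  congr 1
  have : ∀ z ∈ (univ : Finset (Fin (p+2))).erase (Pcomp πs n x),
      (if z = Pcomp πs n x then (Ap (p+2) n).1 else (Ap (p+2) n).2) = (Ap (p+2) n).2 := by
    intro z hz
    rw [mem_erase] at hz
    rw [if_neg hz.1]
  rw [Finset.sum_congr rfl this, Finset.sum_const, smul_eq_mul,
    Finset.card_erase_of_mem (mem_univ _), Finset.card_univ, Fintype.card_fin]
  congr 1

lemma count_general (m N : ℕ) (πs : ℕ → Equiv.Perm (Fin m)) (E : Fin m → Fin m → Prop) :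
    Fintype.card {f : Fin (N+1) → Fin m // E (f 0) (f (Fin.last N)) ∧
      ∀ i : Fin N, πs i.val (f i.castSucc) ≠ f i.succ}
    = ∑ x : Fin m, ∑ y : Fin m, if E x y then Wcnt m πs N x y else 0 := by
  rw [Fintype.card_subtype]
  rw [Finset.card_eq_sum_card_fiberwise
    (f := fun f : Fin (N+1) → Fin m => (f 0, f (Fin.last N)))
    (t := (univ : Finset (Fin m × Fin m))) (fun _ _ => mem_univ _)]
  rw [Fintype.sum_prod_type]
  refine Finset.sum_congr rfl fun x _ => Finset.sum_congr rfl fun y _ => ?_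
  rw [Finset.filter_filter]
  by_cases hE : E x y
  · rw [if_pos hE, Wcnt, Fintype.card_subtype]
    apply Finset.card_nbij' (fun f => f) (fun f => f)
    · intro f hf
      simp only [mem_coe, mem_filter, mem_univ, true_and, Prod.mk.injEq] at hf ⊢
      obtain ⟨⟨hEf, hp⟩, h0, hl⟩ := hf
      exact ⟨h0, hl, hp⟩
    · intro f hf
      simp only [mem_coe, mem_filter, mem_univ, true_and, Prod.mk.injEq] at hf ⊢
      obtain ⟨h0, hl, hp⟩ := hf
      exact ⟨⟨by rwa [h0, hl], hp⟩, h0, hl⟩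
    · intro f _; rfl
    · intro f _; rfl
  · rw [if_neg hE, Finset.card_eq_zero, Finset.eq_empty_iff_forall_notMem]
    intro f hf
    simp only [mem_filter, mem_univ, true_and, Prod.mk.injEq] at hf
    obtain ⟨⟨hEf, _⟩, h0, hl⟩ := hf
    rw [h0, hl] at hEf
    exact hE hEf

lemma mult_def (k l : ℕ) (u v : Fin (2*k+2)) :
    (cycleWithMultiEdge k l).mult u v =
      if u.val = v.val then 0
      else if u.val + 1 = v.val ∨ v.val + 1 = u.val then 1
      else if (u.val = 0 ∧ v.val = 2*k+1) ∨ (v.val = 0 ∧ u.val = 2*k+1) then l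
      else 0 := by
  simp only [cycleWithMultiEdge, Fin.ext_iff]

variable {k l m : ℕ}

noncomputable def pis (c : FullCover (cycleWithMultiEdge k l) m) : ℕ → Equiv.Perm (Fin m) :=
  fun i => if h : i < 2*k+1 then
    c.perm (Fin.castSucc ⟨i, by omega⟩) (Fin.succ ⟨i, by omega⟩) 0 else 1

noncomputable def tau (c : FullCover (cycleWithMultiEdge k l) m) (j : ℕ) : Equiv.Perm (Fin m) :=
  c.perm (0 : Fin (2*k+2)) (Fin.last (2*k+1)) j

lemma isColoring_iff (hk : 1 ≤ k) (c : FullCover (cycleWithMultiEdge k l) m)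
    (f : Fin (2*k+1+1) → Fin m) :
    c.IsColoring f ↔ ((∀ j < l, tau c j (f 0) ≠ f (Fin.last (2*k+1))) ∧
      ∀ i : Fin (2*k+1), pis c i.val (f i.castSucc) ≠ f i.succ) := by
  constructor
  · intro h
    constructor
    · intro j hj
      have hm : j < (cycleWithMultiEdge k l).mult (0 : Fin (2*k+2)) (Fin.last (2*k+1)) := by
        rw [mult_def]
        have h0 : (0 : Fin (2*k+2)).val = 0 := rfl
        have hlast : (Fin.last (2*k+1) : Fin (2*k+2)).val = 2*k+1 := rfl
        rw [h0, hlast, if_neg (by omega), if_neg (by omega), if_pos (by omega)]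
        exact hj
      exact h _ _ j hm
    · intro i
      have hm : 0 < (cycleWithMultiEdge k l).mult i.castSucc i.succ := by
        rw [mult_def]
        have h1 : (i.castSucc : Fin (2*k+2)).val = i.val := rfl
        have h2 : (i.succ : Fin (2*k+2)).val = i.val + 1 := rfl
        rw [h1, h2, if_neg (by omega), if_pos (by omega)]
        omega
      have := h _ _ 0 hm
      rw [pis, dif_pos i.isLt]
      have hcast : (Fin.castSucc ⟨i.val, by omega⟩ : Fin (2*k+2)) = i.castSucc := rfl
      have hsucc : (Fin.succ ⟨i.val, by omega⟩ : Fin (2*k+2)) = i.succ := rfl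
      rw [hcast, hsucc]
      exact this
  · rintro ⟨hend, hpath⟩ u v i hi
    rw [mult_def] at hi
    by_cases h1 : u.val = v.val
    · rw [if_pos h1] at hi; omega
    rw [if_neg h1] at hi
    by_cases h2 : u.val + 1 = v.val ∨ v.val + 1 = u.val
    · rw [if_pos h2] at hi
      have hi0 : i = 0 := by omega
      subst hi0
      rcases h2 with h2 | h2
      · have hu : u.val < 2*k+1 := by omega
        have hp := hpath ⟨u.val, hu⟩
        rw [pis, dif_pos hu] at hp
        have hcu : (Fin.castSucc ⟨u.val, by omega⟩ : Fin (2*k+2)) = u := Fin.ext rfl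
        have hcv : (Fin.succ ⟨u.val, by omega⟩ : Fin (2*k+2)) = v := Fin.ext (by
          simp only [Fin.val_succ]; exact h2)
        rw [show (Fin.castSucc (⟨u.val, hu⟩ : Fin (2*k+1)) : Fin (2*k+1+1)) = Fin.castSucc ⟨u.val, by omega⟩ from rfl] at hp
        rw [hcu, hcv] at hp
        exact hp
      · have hv : v.val < 2*k+1 := by omega
        have hp := hpath ⟨v.val, hv⟩
        rw [pis, dif_pos hv] at hp
        have hcu : (Fin.castSucc ⟨v.val, by omega⟩ : Fin (2*k+2)) = v := Fin.ext rfl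
        have hcv : (Fin.succ ⟨v.val, by omega⟩ : Fin (2*k+2)) = u := Fin.ext (by
          simp only [Fin.val_succ]; exact h2)
        rw [hcu, hcv] at hp
        rw [c.compat v u 0]
        intro heq
        apply hp
        rw [← heq, Equiv.apply_symm_apply]
    · rw [if_neg h2] at hi
      by_cases h3 : (u.val = 0 ∧ v.val = 2*k+1) ∨ (v.val = 0 ∧ u.val = 2*k+1)
      · rw [if_pos h3] at hi
        rcases h3 with ⟨h30, h31⟩ | ⟨h30, h31⟩
        · have he := hend i hi
          have hcu : (0 : Fin (2*k+2)) = u := Fin.ext (by simp [h30])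
          have hcv : (Fin.last (2*k+1) : Fin (2*k+2)) = v := Fin.ext (by
            simp only [Fin.val_last]; omega)
          rw [tau, hcu, hcv] at he
          exact he
        · have he := hend i hi
          have hcu : (0 : Fin (2*k+2)) = v := Fin.ext (by simp [h30])
          have hcv : (Fin.last (2*k+1) : Fin (2*k+2)) = u := Fin.ext (by
            simp only [Fin.val_last]; omega)
          rw [tau, hcu, hcv] at he
          rw [c.compat v u i]
          intro heq
          apply he
          rw [← heq, Equiv.apply_symm_apply]
      · rw [if_neg h3] at hi
        omega

lemma numColorings_eq (hk : 1 ≤ k) (c : FullCover (cycleWithMultiEdge k l) m) :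
    c.numColorings = ∑ x : Fin m, ∑ y : Fin m,
      if (∀ j < l, tau c j x ≠ y) then Wcnt m (pis c) (2*k+1) x y else 0 := by
  rw [FullCover.numColorings]
  have e : {f : Fin (2*k+2) → Fin m // c.IsColoring f} ≃
      {f : Fin (2*k+1+1) → Fin m //
        (∀ j < l, tau c j (f 0) ≠ f (Fin.last (2*k+1))) ∧
        ∀ i : Fin (2*k+1), pis c i.val (f i.castSucc) ≠ f i.succ} :=
    Equiv.subtypeEquivRight (fun f => by rw [isColoring_iff hk c f])
  rw [Nat.card_congr e, Nat.card_eq_fintype_card]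
  convert count_general m (2*k+1) (pis c) (fun x y => ∀ j < l, tau c j x ≠ y) using 2 with x _
  refine Finset.sum_congr rfl fun y _ => ?_
  congr

end PDPAux

section PDPAux2
open Finset
open scoped Classical
open Fin.NatCast

variable {k l m : ℕ}

noncomputable def minCover (k l m : ℕ) [NeZero m] : FullCover (cycleWithMultiEdge k l) m where
  perm u v i :=
    if u.val < v.val then
      (if u.val = 0 ∧ v.val = 2*k+1 then Equiv.addRight ((i+1 : ℕ) : Fin m) else 1)
    else if v.val < u.val then
      (if v.val = 0 ∧ u.val = 2*k+1 then Equiv.addRight ((i+1 : ℕ) : Fin m) else 1).symm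
    else 1
  compat := by
    intro u v i
    split_ifs <;> first | rfl | (exact (Equiv.symm_symm _).symm) | omega

lemma pis_minCover (hk : 1 ≤ k) [NeZero m] (i : ℕ) :
    pis (minCover k l m) i = 1 := by
  rw [pis]
  split
  · next h =>
    simp only [minCover, Fin.coe_castSucc, Fin.val_succ]
    split_ifs <;> first | rfl | (exfalso; omega)
  · rfl

lemma tau_minCover [NeZero m] (j : ℕ) :
    tau (minCover k l m) j = Equiv.addRight ((j+1 : ℕ) : Fin m) := by
  rw [tau]
  simp only [minCover]
  have h1 : (0 : Fin (2*k+2)).val = 0 := rfl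
  have h2 : (Fin.last (2*k+1) : Fin (2*k+2)).val = 2*k+1 := rfl
  rw [h1, h2, if_pos (by omega), if_pos (by omega)]

lemma Pcomp_pis_minCover (hk : 1 ≤ k) [NeZero m] (n : ℕ) :
    Pcomp (pis (minCover k l m)) n = 1 := by
  induction n with
  | zero => rfl
  | succ n ih =>
    show pis (minCover k l m) n * Pcomp (pis (minCover k l m)) n = 1
    rw [pis_minCover hk, ih, one_mul]

end PDPAux2

section PDPAux3
open Finset
open scoped Classical
open Fin.NatCast

variable {k l p : ℕ}

lemma A2_eq_A1_succ (p k : ℕ) :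
    (Ap (p+2) (2*k+1)).2 = (Ap (p+2) (2*k+1)).1 + 1 := by
  have hd := Ap_diff p (2*k+1)
  rw [Odd.neg_one_pow ⟨k, by ring⟩] at hd
  omega

lemma sum_split (c : FullCover (cycleWithMultiEdge k l) (p+2)) (x : Fin (p+2)) :
    (∑ y : Fin (p+2), if (∀ j < l, tau c j x ≠ y) then Wcnt (p+2) (pis c) (2*k+1) x y else 0)
      + (∑ y : Fin (p+2), if (∀ j < l, tau c j x ≠ y) then 0 else Wcnt (p+2) (pis c) (2*k+1) x y)
    = (Ap (p+2) (2*k+1)).1 + (p+1) * (Ap (p+2) (2*k+1)).2 := by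
  rw [← Finset.sum_add_distrib, ← sum_Wcnt p (pis c) (2*k+1) x]
  refine Finset.sum_congr rfl fun y _ => ?_
  by_cases h : (∀ j < l, tau c j x ≠ y)
  · rw [if_pos h, if_pos h, add_zero]
  · rw [if_neg h, if_neg h, zero_add]

lemma bad_le (c : FullCover (cycleWithMultiEdge k l) (p+2)) (x : Fin (p+2)) :
    (∑ y : Fin (p+2), if (∀ j < l, tau c j x ≠ y) then 0 else Wcnt (p+2) (pis c) (2*k+1) x y)
      ≤ l * (Ap (p+2) (2*k+1)).2 := by
  have hW : ∀ y, Wcnt (p+2) (pis c) (2*k+1) x y ≤ (Ap (p+2) (2*k+1)).2 := by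
    intro y
    rw [Wcnt_eq]
    split
    · rw [A2_eq_A1_succ]; omega
    · exact le_refl _
  have e1 : (∑ y : Fin (p+2), if (∀ j < l, tau c j x ≠ y) then 0
        else Wcnt (p+2) (pis c) (2*k+1) x y)
      = ∑ y ∈ univ.filter (fun y => ¬ (∀ j < l, tau c j x ≠ y)),
          Wcnt (p+2) (pis c) (2*k+1) x y := by
    rw [Finset.sum_filter]
    exact Finset.sum_congr rfl fun y _ => (ite_not _ _ _).symm
  rw [e1]
  calc (∑ y ∈ univ.filter (fun y => ¬ (∀ j < l, tau c j x ≠ y)),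
          Wcnt (p+2) (pis c) (2*k+1) x y)
      ≤ (univ.filter (fun y => ¬ (∀ j < l, tau c j x ≠ y))).card * (Ap (p+2) (2*k+1)).2 := by
        have := Finset.sum_le_card_nsmul (univ.filter (fun y => ¬ (∀ j < l, tau c j x ≠ y)))
          (fun y => Wcnt (p+2) (pis c) (2*k+1) x y) ((Ap (p+2) (2*k+1)).2) (fun y _ => hW y)
        simpa [smul_eq_mul] using this
    _ ≤ l * (Ap (p+2) (2*k+1)).2 := by
        apply Nat.mul_le_mul_right
        calc (univ.filter (fun y => ¬ (∀ j < l, tau c j x ≠ y))).card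
            ≤ ((range l).image (fun j => tau c j x)).card := by
              apply Finset.card_le_card
              intro y hy
              rw [mem_filter] at hy
              have hy2 := hy.2
              push_neg at hy2
              obtain ⟨j, hj, hyy⟩ := hy2
              exact mem_image.mpr ⟨j, mem_range.mpr hj, hyy⟩
          _ ≤ (range l).card := Finset.card_image_le
          _ = l := card_range l

lemma bad_eq (hk : 1 ≤ k) (hlp : l ≤ p+1) (x : Fin (p+2)) :
    (∑ y : Fin (p+2), if (∀ j < l, tau (minCover k l (p+2)) j x ≠ y) then 0
        else Wcnt (p+2) (pis (minCover k l (p+2))) (2*k+1) x y)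
    = l * (Ap (p+2) (2*k+1)).2 := by
  have hcast : ∀ j, j < l → ((j+1 : ℕ) : Fin (p+2)).val = j+1 := fun j hj => by
    rw [Fin.val_natCast]; exact Nat.mod_eq_of_lt (by omega)
  have htau : ∀ (j : ℕ) (x' : Fin (p+2)),
      tau (minCover k l (p+2)) j x' = x' + ((j+1 : ℕ) : Fin (p+2)) := fun j x' => by
    rw [tau_minCover]; rfl
  have e1 : (∑ y : Fin (p+2), if (∀ j < l, tau (minCover k l (p+2)) j x ≠ y) then 0
        else Wcnt (p+2) (pis (minCover k l (p+2))) (2*k+1) x y)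
      = ∑ y ∈ univ.filter (fun y => ¬ (∀ j < l, tau (minCover k l (p+2)) j x ≠ y)),
          Wcnt (p+2) (pis (minCover k l (p+2))) (2*k+1) x y := by
    rw [Finset.sum_filter]
    exact Finset.sum_congr rfl fun y _ => (ite_not _ _ _).symm
  have e2 : univ.filter (fun y => ¬ (∀ j < l, tau (minCover k l (p+2)) j x ≠ y))
      = (range l).image (fun j => x + ((j+1 : ℕ) : Fin (p+2))) := by
    ext y
    simp only [mem_filter, mem_univ, true_and, mem_image, mem_range]
    constructor
    · intro hy
      push_neg at hy
      obtain ⟨j, hj, hyy⟩ := hy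
      exact ⟨j, hj, by rw [← htau j x]; exact hyy⟩
    · rintro ⟨j, hj, rfl⟩
      push_neg
      exact ⟨j, hj, htau j x⟩
  rw [e1, e2]
  rw [Finset.sum_image (by
    intro j hj j' hj' h
    have h2 : ((j+1 : ℕ) : Fin (p+2)) = ((j'+1 : ℕ) : Fin (p+2)) := by
      exact add_left_cancel h
    have h3 := congrArg Fin.val h2
    rw [hcast j (mem_range.mp hj), hcast j' (mem_range.mp hj')] at h3
    omega)]
  have e3 : ∀ j ∈ range l, Wcnt (p+2) (pis (minCover k l (p+2))) (2*k+1) x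
      (x + ((j+1 : ℕ) : Fin (p+2))) = (Ap (p+2) (2*k+1)).2 := by
    intro j hj
    rw [Wcnt_eq, Pcomp_pis_minCover hk]
    rw [if_neg]
    intro heq
    rw [Equiv.Perm.one_apply] at heq
    have h0 : ((j+1 : ℕ) : Fin (p+2)) = 0 := by rwa [add_eq_left] at heq
    have h3 := congrArg Fin.val h0
    rw [hcast j (mem_range.mp hj)] at h3
    simp at h3
  rw [Finset.sum_congr rfl e3, Finset.sum_const, card_range, smul_eq_mul]

end PDPAux3

section PDPFinal
open Finset
open scoped Classical

variable {k l p : ℕ}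

lemma nc_eq (hk : 1 ≤ k) (c : FullCover (cycleWithMultiEdge k l) (p+2)) :
    c.numColorings + (∑ x : Fin (p+2), ∑ y : Fin (p+2),
        if (∀ j < l, tau c j x ≠ y) then 0 else Wcnt (p+2) (pis c) (2*k+1) x y)
    = (p+2) * ((Ap (p+2) (2*k+1)).1 + (p+1) * (Ap (p+2) (2*k+1)).2) := by
  rw [numColorings_eq hk c, ← Finset.sum_add_distrib]
  rw [Finset.sum_congr rfl (fun x _ => sum_split c x), Finset.sum_const, card_univ,
    Fintype.card_fin, smul_eq_mul]

lemma badsum_eq (hk : 1 ≤ k) (hlp : l ≤ p+1) :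
    (∑ x : Fin (p+2), ∑ y : Fin (p+2),
      if (∀ j < l, tau (minCover k l (p+2)) j x ≠ y) then 0
      else Wcnt (p+2) (pis (minCover k l (p+2))) (2*k+1) x y)
    = (p+2) * (l * (Ap (p+2) (2*k+1)).2) := by
  rw [Finset.sum_congr rfl (fun x _ => bad_eq hk hlp x), Finset.sum_const, card_univ,
    Fintype.card_fin, smul_eq_mul]

lemma minCover_min (hk : 1 ≤ k) (hlp : l ≤ p+1) (c : FullCover (cycleWithMultiEdge k l) (p+2)) :
    (minCover k l (p+2)).numColorings ≤ c.numColorings := by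
  have h1 := nc_eq hk (minCover k l (p+2))
  have h2 := nc_eq hk c
  have h3 := badsum_eq hk hlp
  have h4 : (∑ x : Fin (p+2), ∑ y : Fin (p+2),
      if (∀ j < l, tau c j x ≠ y) then 0 else Wcnt (p+2) (pis c) (2*k+1) x y)
      ≤ (p+2) * (l * (Ap (p+2) (2*k+1)).2) := by
    calc (∑ x : Fin (p+2), ∑ y : Fin (p+2),
        if (∀ j < l, tau c j x ≠ y) then 0 else Wcnt (p+2) (pis c) (2*k+1) x y)
        ≤ (univ : Finset (Fin (p+2))).card • (l * (Ap (p+2) (2*k+1)).2) :=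
          Finset.sum_le_card_nsmul _ _ _ (fun x _ => bad_le c x)
      _ = (p+2) * (l * (Ap (p+2) (2*k+1)).2) := by
          rw [card_univ, Fintype.card_fin, smul_eq_mul]
  omega

lemma minCover_value (hk : 1 ≤ k) (hl : 1 ≤ l) (hlp : l ≤ p+1) :
    ((minCover k l (p+2)).numColorings : ℤ)
      = ((p:ℤ)+1)^(2*k+1) * (((p:ℤ)+2) - l) - l := by
  have h1 := nc_eq hk (minCover k l (p+2))
  rw [badsum_eq hk hlp] at h1
  have h1' : ((minCover k l (p+2)).numColorings : ℤ)
      + ((p:ℤ)+2) * (l * ((Ap (p+2) (2*k+1)).2 : ℤ))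
      = ((p:ℤ)+2) * (((Ap (p+2) (2*k+1)).1 : ℤ) + ((p:ℤ)+1) * ((Ap (p+2) (2*k+1)).2 : ℤ)) := by
    exact_mod_cast h1
  have hs := Ap_sum p (2*k+1)
  have hd := Ap_diff p (2*k+1)
  rw [Odd.neg_one_pow ⟨k, by ring⟩] at hd
  have hb : ((p:ℤ)+2) * ((Ap (p+2) (2*k+1)).2 : ℤ) = ((p:ℤ)+1)^(2*k+1) + 1 := by linarith
  have hexp : ((p:ℤ)+2) * (l * ((Ap (p+2) (2*k+1)).2 : ℤ))
      = (l : ℤ) * (((p:ℤ)+1)^(2*k+1) + 1) := by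
    rw [show ((p:ℤ)+2) * (l * ((Ap (p+2) (2*k+1)).2 : ℤ))
      = (l:ℤ) * (((p:ℤ)+2) * ((Ap (p+2) (2*k+1)).2 : ℤ)) from by ring, hb]
  rw [hexp] at h1'
  have h2' : (((Ap (p+2) (2*k+1)).1 : ℤ) + ((p:ℤ)+1) * ((Ap (p+2) (2*k+1)).2 : ℤ))
      = ((p:ℤ)+1)^(2*k+1) := hs
  rw [h2'] at h1'
  have : ((minCover k l (p+2)).numColorings : ℤ)
      = ((p:ℤ)+2) * ((p:ℤ)+1)^(2*k+1) - (l:ℤ) * (((p:ℤ)+1)^(2*k+1) + 1) := by linarith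
  rw [this]
  ring

end PDPFinal

/-- For the multigraph `G` consisting of the cycle `C_{2k+2}` with one of its
edges replaced by `l` parallel edges, `P_DP(G,m) = (m-1)^{2k+1}(m-l) - l`
whenever `m ≥ l + 1`. -/
theorem PDP_cycle_with_multiedge (k l : ℕ) (hk : 1 ≤ k) (hl : 1 ≤ l)
    (m : ℕ) (hm : l + 1 ≤ m) :
    ((cycleWithMultiEdge k l).PDP m : ℤ) =
      ((m : ℤ) - 1) ^ (2 * k + 1) * ((m : ℤ) - l) - l := by
  obtain ⟨p, rfl⟩ : ∃ p, m = p + 2 := ⟨m - 2, by omega⟩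
  have hlp : l ≤ p + 1 := by omega
  have hPDP : (cycleWithMultiEdge k l).PDP (p+2) = (minCover k l (p+2)).numColorings := by
    have hmem : (minCover k l (p+2)).numColorings ∈
        {n | ∃ c : FullCover (cycleWithMultiEdge k l) (p+2), n = c.numColorings} :=
      ⟨minCover k l (p+2), rfl⟩
    apply le_antisymm
    · exact Nat.sInf_le hmem
    · apply le_csInf (Set.nonempty_of_mem hmem)
      rintro b ⟨c, rfl⟩
      exact minCover_min hk hlp c
  rw [hPDP, minCover_value hk hl hlp]
  push_cast
  ring
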